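/- Let A be a commutative ring and p a prime number. Set à := (1+pA)⁻¹A (localization at the submonoid 1+pA), A' := A[1/p], and Ã' := Ã[1/p], with the canonical commutative square of localization maps A → Ã, A → A', Ã → Ã', A' → Ã'. Then this square is a pullback of rings: the induced ring homomorphism from A to the fiber product à ×_{Ã'} A' = {(x, y) ∈ à × A' : x and y have the same image in Ã'} is bijective. -/

import Mathlib

/-- The multiplicative submonoid `1 + pA = {1 + p·a : a ∈ A}` of a commutative ring `A`. -/
def oneAddMul (A : Type*) [CommRing A] (p : ℕ) : Submonoid A where
  carrier := {x | ∃ a : A, x = 1 + (p : A) * a}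
  one_mem' := ⟨0, by ring⟩
  mul_mem' := by
    rintro x y ⟨a, rfl⟩ ⟨b, rfl⟩
    exact ⟨a + b + (p : A) * (a * b), by ring⟩

/-- Geometric series: `1 + p*e` is invertible modulo every power of `p`. -/
private lemma geom_aux {A : Type*} [CommRing A] (p e : A) :
    ∀ N : ℕ, ∃ u f : A, u * (1 + p * e) = 1 + p ^ N * f
  | 0 => ⟨0, -1, by ring⟩
  | N + 1 => by
    obtain ⟨u, f, hu⟩ := geom_aux p e N
    exact ⟨u - p ^ N * f, -(f * e), by linear_combination hu⟩

private lemma tors_aux {A : Type*} [CommRing A] {p b z : A} (h : (1 + p * b) * z = 0) :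
    ∀ k : ℕ, ∃ w : A, z = p ^ k * w * z
  | 0 => ⟨1, by ring⟩
  | k + 1 => by
    obtain ⟨w, hw⟩ := tors_aux h k
    exact ⟨-(w * b), by linear_combination hw + p ^ k * w * h⟩

/-- Let `Ã = (1+pA)⁻¹A`, `A' = A[1/p]`, `Ã' = Ã[1/p]`, and let `g : A' → Ã'` be the
canonical map (characterized by compatibility with the localization maps from `A`). Then
the square is a pullback: the map `A → Ã ×_{Ã'} A'` is bijective, i.e. `a ↦ (image in Ã,
image in A')` is injective, and every pair `(x, y)` with equal images in `Ã'` comes from a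
(then unique) element of `A`. -/
theorem stmt18 (A : Type*) [CommRing A] (p : ℕ) (hp : p.Prime)
    (g : Localization.Away (p : A) →+*
      Localization.Away (p : Localization (oneAddMul A p)))
    (hg : ∀ a : A,
      g (algebraMap A (Localization.Away (p : A)) a) =
        algebraMap (Localization (oneAddMul A p))
          (Localization.Away (p : Localization (oneAddMul A p)))
          (algebraMap A (Localization (oneAddMul A p)) a)) :
    Function.Injective (fun a : A =>
      (algebraMap A (Localization (oneAddMul A p)) a,
        algebraMap A (Localization.Away (p : A)) a)) ∧
    ∀ (x : Localization (oneAddMul A p)) (y : Localization.Away (p : A)),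
      algebraMap (Localization (oneAddMul A p))
          (Localization.Away (p : Localization (oneAddMul A p))) x = g y →
      ∃ a : A, algebraMap A (Localization (oneAddMul A p)) a = x ∧
        algebraMap A (Localization.Away (p : A)) a = y := by
  set Atil := Localization (oneAddMul A p) with hAtildef
  constructor
  · intro a₁ a₂ h
    simp only [Prod.mk.injEq] at h
    obtain ⟨h1, h2⟩ := h
    obtain ⟨s, hs⟩ := (IsLocalization.eq_iff_exists (oneAddMul A p) Atil).mp h1
    obtain ⟨c, hc⟩ :=
      (IsLocalization.eq_iff_exists (Submonoid.powers ((p : A)))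
        (Localization.Away (p : A))).mp h2
    obtain ⟨b, hb⟩ := s.2
    obtain ⟨n, hn⟩ := c.2
    replace hn : (p : A) ^ n = (c : A) := hn
    have h0 : (1 + (p : A) * b) * (a₁ - a₂) = 0 := by
      rw [← hb]; linear_combination hs
    have hpn : (p : A) ^ n * (a₁ - a₂) = 0 := by
      rw [hn]; linear_combination hc
    obtain ⟨w, hw⟩ := tors_aux h0 n
    have : a₁ - a₂ = 0 := by linear_combination hw + w * hpn
    exact sub_eq_zero.mp this
  · intro x y h
    obtain ⟨⟨a, s⟩, hx⟩ := IsLocalization.mk'_surjective (oneAddMul A p) x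
    dsimp only at hx
    obtain ⟨⟨c, q⟩, hy⟩ :=
      IsLocalization.mk'_surjective (Submonoid.powers ((p : A))) y
    dsimp only at hy
    obtain ⟨b, hb⟩ := s.2
    obtain ⟨n, hn⟩ := q.2
    replace hn : (p : A) ^ n = (q : A) := hn
    -- from mk'_spec for y, applying g and the compatibility hg
    have hyspec : y * algebraMap A (Localization.Away (p : A)) ↑q =
        algebraMap A (Localization.Away (p : A)) c := by
      rw [← hy]; exact IsLocalization.mk'_spec _ c q
    have key : algebraMap Atil (Localization.Away (p : Atil))
          (x * algebraMap A Atil ↑q) =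
        algebraMap Atil (Localization.Away (p : Atil)) (algebraMap A Atil c) := by
      have := congrArg g hyspec
      rw [map_mul, hg, hg, ← h, ← map_mul] at this
      exact this
    obtain ⟨e, he⟩ :=
      (IsLocalization.eq_iff_exists (Submonoid.powers ((p : Atil)))
        (Localization.Away (p : Atil))).mp key
    obtain ⟨m, hm⟩ := e.2
    replace hm : (p : Atil) ^ m = (e : Atil) := hm
    have hpc : (p : Atil) = algebraMap A Atil (p : A) := (map_natCast _ p).symm
    have he' : algebraMap A Atil ((p : A) ^ m) * (x * algebraMap A Atil ↑q) =
        algebraMap A Atil ((p : A) ^ m) * algebraMap A Atil c := by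
      rw [map_pow, ← hpc, hm]; exact he
    have hxspec : x * algebraMap A Atil ↑s = algebraMap A Atil a := by
      rw [← hx]; exact IsLocalization.mk'_spec _ a s
    have hAtil2 : algebraMap A Atil ((p : A) ^ m * ↑q * a) =
        algebraMap A Atil ((p : A) ^ m * c * ↑s) := by
      rw [map_mul, map_mul, map_mul, map_mul]
      linear_combination (algebraMap A Atil ↑s) * he' -
        algebraMap A Atil ((p : A) ^ m) * algebraMap A Atil ↑q * hxspec
    obtain ⟨t, ht⟩ := (IsLocalization.eq_iff_exists (oneAddMul A p) Atil).mp hAtil2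
    obtain ⟨b₀, hb₀⟩ := t.2
    rw [hb, hb₀, ← hn] at ht
    -- ht : (1 + p*b₀) * (p^m * p^n * a) = (1 + p*b₀) * (p^m * c * (1 + p*b))
    obtain ⟨u, f, hu⟩ := geom_aux (p : A) (b + b₀ + (p : A) * (b * b₀)) (m + n)
    -- hu : u * (1 + p * e₀) = 1 + p^(m+n) * f, where 1 + p*e₀ = (1+p*b)*(1+p*b₀)
    refine ⟨u * (1 + (p : A) * b₀) * a - (p : A) ^ m * f * c, ?_, ?_⟩
    · rw [← hx, eq_comm, IsLocalization.mk'_eq_iff_eq_mul, ← map_mul,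
        IsLocalization.eq_iff_exists (oneAddMul A p)]
      refine ⟨t, ?_⟩
      rw [hb, hb₀]
      linear_combination -(((1 + (p : A) * b₀) * a) * hu + f * ht)
    · rw [← hy, eq_comm, IsLocalization.mk'_eq_iff_eq_mul, ← map_mul,
        IsLocalization.eq_iff_exists (Submonoid.powers ((p : A)))]
      refine ⟨⟨(p : A) ^ m, m, rfl⟩, ?_⟩
      rw [← hn]
      linear_combination -(u * ht + ((p : A) ^ m * c) * hu)
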